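/- Let p ≥ 1 and α be positive integers, fix parameters r_0 = 1, r_1, …, r_{p+1} with r_{e−1} dividing r_e for each e, let 1 ≤ d ≤ p, and let α_d be the largest multiple of r_d that is strictly less than α. If v, w, x, y ∈ {0,1}^α satisfy π_{α_d}(v) ≠ π_{α_d}(w), x ≠ y and π_{α_d}(x) = π_{α_d}(y), then c_p(v,w) ≠ c_p(x,y). -/

import Mathlib

/-!
Coloring machinery of Conlon–Fox–Lee–Sudakov. Vectors in `{0,1}^α` are modelled as
`Bool` lists of length `α`. Fix block lengths `r 0 = 1, r 1, …` with `r d ∣ r (d+1)`.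
-/

/-- The blocks of resolution with block length `r`: split a vector into consecutive
blocks of length `r` (the last block may be shorter). -/
def blocksOf (r : ℕ) (v : List Bool) : List (List Bool) := v.toChunks r

/-- The function `η_d` (with `r = r_d`): records the position `i` of the first pair of
differing blocks of resolution `d` together with the unordered pair `{v_i, w_i}` of
these blocks; it takes the value `none` (playing the role of `0`) when `v = w`. -/
def eta (r : ℕ) (v w : List Bool) : Option (ℕ × Sym2 (List Bool)) :=
  (((blocksOf r v).zip (blocksOf r w)).zipIdx.map Prod.swap |>.find? (fun q => q.2.1 != q.2.2)).map
    (fun q => (q.1, s(q.2.1, q.2.2)))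

/-- The function `ξ_d`: apply `η_d` to each corresponding pair of blocks of
resolution `d+1`. -/
def xi (r : ℕ → ℕ) (d : ℕ) (v w : List Bool) : List (Option (ℕ × Sym2 (List Bool))) :=
  ((blocksOf (r (d+1)) v).zip (blocksOf (r (d+1)) w)).map fun q => eta (r d) q.1 q.2

/-- The type of colors used by the coloring `c_p`. -/
abbrev EGColor := List (List (Option (ℕ × Sym2 (List Bool))))

instance : DecidableEq (List (Option (ℕ × Sym2 (List Bool)))) := instDecidableEqList
instance : DecidableEq EGColor := instDecidableEqList

/-- The coloring `c_p (v,w) = (ξ_p(v,w), ξ_{p-1}(v,w), …, ξ_0(v,w))`. -/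
def cColor (r : ℕ → ℕ) (p : ℕ) (v w : List Bool) : EGColor :=
  (List.range (p+1)).map fun j => xi r (p - j) v w

/-- The set of colors appearing under `c_p` on (unordered) pairs of distinct
elements of `S`. -/
def colorsOn (r : ℕ → ℕ) (p : ℕ) (S : Finset (List Bool)) : Finset EGColor :=
  ((S ×ˢ S).filter fun q => q.1 ≠ q.2).image fun q => cColor r p q.1 q.2

/-- The vertex set `{0,1}^α`, realized as the set of all `Bool` lists of length `α`. -/
def allVecs (α : ℕ) : Finset (List Bool) :=
  Finset.univ.image fun v : Fin α → Bool => List.ofFn v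

/-- `alphaD rd α`: the largest multiple of `rd` that is strictly less than `α`
(for `α, rd ≥ 1`). -/
def alphaD (rd α : ℕ) : ℕ := rd * ((α - 1) / rd)

/-- The set `C_E^{(d)}` of emerging colors of `S` at resolution `d`: the unordered pairs
`{v'', w''}` of final segments of elements `v = (v', v'')`, `w = (w', w'')` of `S`
(split at `α_d`) with `v' = w'` and `v'' ≠ w''`. -/
def CEset (r : ℕ → ℕ) (α : ℕ) (S : Finset (List Bool)) (d : ℕ) : Finset (Sym2 (List Bool)) :=
  ((S ×ˢ S).filter fun q =>
      q.1.take (alphaD (r d) α) = q.2.take (alphaD (r d) α) ∧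
      q.1.drop (alphaD (r d) α) ≠ q.2.drop (alphaD (r d) α)).image
    fun q => s(q.1.drop (alphaD (r d) α), q.2.drop (alphaD (r d) α))

/-- The set `C_I^{(d)}` of inherited colors of `S` at resolution `d`: the pairs
`(c_p(v', w'), η_{d-1}(v'', w''))` over elements `v = (v', v'')`, `w = (w', w'')` of `S`
(split at `α_d`) with `v' ≠ w'`. -/
def CIset (r : ℕ → ℕ) (p α : ℕ) (S : Finset (List Bool)) (d : ℕ) :
    Finset (EGColor × Option (ℕ × Sym2 (List Bool))) :=
  ((S ×ˢ S).filter fun q =>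
      q.1.take (alphaD (r d) α) ≠ q.2.take (alphaD (r d) α)).image
    fun q => (cColor r p (q.1.take (alphaD (r d) α)) (q.2.take (alphaD (r d) α)),
              eta (r (d-1)) (q.1.drop (alphaD (r d) α)) (q.2.drop (alphaD (r d) α)))

theorem go_spec {α : Type*} (n : ℕ) : ∀ (ys : List α) (acc₁ : Array α) (acc₂ : Array (List α)),
    1 ≤ acc₁.size → acc₁.size ≤ n + 1 →
    List.toChunks.go (n+1) ys acc₁ acc₂ =
      acc₂.toList ++ (acc₁.toList ++ ys.take (n + 1 - acc₁.size)) ::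
        List.toChunks (n+1) (ys.drop (n + 1 - acc₁.size))
  | [], acc₁, acc₂, _, _ => by
      simp [List.toChunks.go, List.toChunks]
  | y :: ys, acc₁, acc₂, h1, h2 => by
      rw [List.toChunks.go]
      rcases eq_or_lt_of_le h2 with he | hlt
      · have : (acc₁.size == n + 1) = true := by simpa using he
        rw [if_pos this]
        rw [go_spec n ys ((Array.mkEmpty (n+1)).push y) (acc₂.push acc₁.toList) (by simp) (by simp)]
        have hz : n + 1 - acc₁.size = 0 := by omega
        have : List.toChunks (n+1) (y :: ys) =
            (y :: ys.take n) :: List.toChunks (n+1) (ys.drop n) := by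
          show List.toChunks.go (n+1) ys #[y] #[] = _
          rw [go_spec n ys #[y] #[] (by simp) (by simp)]
          simp
        simp [hz, this]
      · have : (acc₁.size == n + 1) = false := by simp; omega
        rw [if_neg (by simp_all)]
        rw [go_spec n ys (acc₁.push y) acc₂ (by simp) (by simp; omega)]
        have h3 : n + 1 - acc₁.size = (n + 1 - (acc₁.size + 1)) + 1 := by omega
        simp only [Array.toList_push, List.append_assoc, List.singleton_append]
        rw [h3, List.take_succ_cons, List.drop_succ_cons]; simp
  termination_by ys => ys.length

theorem toChunks_cons (s : ℕ) (hs : 0 < s) (l : List Bool) (hl : l ≠ []) :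
    List.toChunks s l = l.take s :: List.toChunks s (l.drop s) := by
  obtain ⟨n, rfl⟩ : ∃ n, s = n + 1 := ⟨s - 1, by omega⟩
  obtain ⟨x, xs, rfl⟩ := List.exists_cons_of_ne_nil hl
  show List.toChunks.go (n+1) xs #[x] #[] = _
  rw [go_spec n xs #[x] #[] (by simp) (by simp)]
  simp [Nat.add_comm]

theorem find?_shift {β : Type*} (p : ℕ × β → Bool) (hp : ∀ m n x, p (m, x) = p (n, x)) :
    ∀ (l : List β) (n : ℕ),
      ((l.zipIdx (n+1)).map Prod.swap).find? p = (((l.zipIdx n).map Prod.swap).find? p).map fun q => (q.1+1, q.2) := by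
  intro l
  induction l with
  | nil => simp
  | cons x t ih =>
    intro n
    rw [List.zipIdx_cons, List.zipIdx_cons, List.map_cons, List.map_cons, Prod.swap_prod_mk,
      Prod.swap_prod_mk, List.find?_cons, List.find?_cons]
    have hpe : p (n+1, x) = p (n, x) := hp _ _ _
    cases hpx : p (n, x)
    · rw [hpe.trans hpx, ih (n+1)]
    · rw [hpe.trans hpx]; rfl

theorem zip_self {β : Type*} : ∀ l : List β, l.zip l = l.map fun a => (a, a)
  | [] => rfl
  | x :: t => by rw [List.zip_cons_cons, zip_self t]; rfl

theorem eta_self (s : ℕ) (u : List Bool) : eta s u u = none := by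
  unfold eta blocksOf
  rw [zip_self, Option.map_eq_none_iff]
  rw [List.find?_eq_none]
  intro q hq
  obtain ⟨z, hz, rfl⟩ := List.mem_map.1 hq
  have h2 := List.fst_mem_of_mem_zipIdx hz
  obtain ⟨c, -, hc⟩ := List.mem_map.1 h2
  simp [Prod.swap, ← hc]

theorem eta_cons_ne (s : ℕ) (hs : 0 < s) (a b : List Bool) (ha : a ≠ []) (hb : b ≠ [])
    (h : a.take s ≠ b.take s) :
    eta s a b = some (0, s(a.take s, b.take s)) := by
  unfold eta blocksOf
  rw [toChunks_cons s hs a ha, toChunks_cons s hs b hb, List.zip_cons_cons]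
  have hne : ((a.take s : List Bool) != b.take s) = true := by simpa using h
  simp [List.zipIdx_cons, List.find?_cons, hne]

theorem eta_cons_eq (s : ℕ) (hs : 0 < s) (a b : List Bool) (ha : a ≠ []) (hb : b ≠ [])
    (h : a.take s = b.take s) :
    eta s a b = (eta s (a.drop s) (b.drop s)).map fun q => (q.1 + 1, q.2) := by
  unfold eta blocksOf
  rw [toChunks_cons s hs a ha, toChunks_cons s hs b hb, List.zip_cons_cons]
  rw [h]
  simp only [List.zipIdx_cons, List.map_cons, Prod.swap_prod_mk, List.find?_cons, bne_self_eq_false]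
  have hsh := find?_shift (fun q : ℕ × (List Bool × List Bool) => q.2.1 != q.2.2)
    (fun m n x => rfl) (((a.drop s).toChunks s).zip ((b.drop s).toChunks s)) 0
  rw [Nat.zero_add] at hsh
  rw [hsh]
  cases ((((a.drop s).toChunks s).zip ((b.drop s).toChunks s)).zipIdx.map Prod.swap).find? (fun q => q.2.1 != q.2.2) <;> rfl

theorem eta_fst (s : ℕ) (hs : 0 < s) : ∀ (f : ℕ), ∀ (a b : List Bool), a.length = b.length →
    a.take f = b.take f → a[f]? ≠ b[f]? → ∃ pr, eta s a b = some (f / s, pr) := by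
  intro f
  induction f using Nat.strong_induction_on with
  | _ f ih =>
    intro a b hlen htake hne
    have hf : f < a.length := by
      by_contra hc
      apply hne
      rw [List.getElem?_eq_none (l := a) (by omega), List.getElem?_eq_none (l := b) (by omega)]
    have ha : a ≠ [] := by intro h; subst h; simp at hf
    have hb : b ≠ [] := by intro h; rw [h, List.length_nil] at hlen; omega
    rcases lt_or_ge f s with hfs | hfs
    · have hne' : a.take s ≠ b.take s := by
        intro hc
        apply hne
        have h1 : (a.take s)[f]? = a[f]? := by rw [List.getElem?_take, if_pos hfs]
        have h2 : (b.take s)[f]? = b[f]? := by rw [List.getElem?_take, if_pos hfs]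
        rw [← h1, ← h2, hc]
      refine ⟨s(a.take s, b.take s), ?_⟩
      rw [eta_cons_ne s hs a b ha hb hne', Nat.div_eq_of_lt hfs]
    · have hts : a.take s = b.take s := by
        have h1 : (a.take f).take s = (b.take f).take s := by rw [htake]
        rwa [List.take_take, List.take_take, min_eq_left hfs] at h1
      have hrec := ih (f - s) (by omega) (a.drop s) (b.drop s)
        (by rw [List.length_drop, List.length_drop, hlen])
        (by rw [List.take_drop, List.take_drop, show s + (f - s) = f by omega, htake]) ?_
      · obtain ⟨pr, hpr⟩ := hrec
        refine ⟨pr, ?_⟩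
        rw [eta_cons_eq s hs a b ha hb hts, hpr]
        simp only [Option.map_some]
        rw [Nat.div_eq_sub_div hs hfs]
      · have h1 : (a.drop s)[f - s]? = a[f]? := by
          rw [List.getElem?_drop]; congr 1; omega
        have h2 : (b.drop s)[f - s]? = b[f]? := by
          rw [List.getElem?_drop]; congr 1; omega
        rw [h1, h2]; exact hne

theorem xi_cons (r : ℕ → ℕ) (d : ℕ) (hR : 0 < r (d+1)) (a b : List Bool)
    (ha : a ≠ []) (hb : b ≠ []) :
    xi r d a b = eta (r d) (a.take (r (d+1))) (b.take (r (d+1))) ::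
      xi r d (a.drop (r (d+1))) (b.drop (r (d+1))) := by
  unfold xi blocksOf
  rw [toChunks_cons _ hR a ha, toChunks_cons _ hR b hb, List.zip_cons_cons, List.map_cons]

def decodeXi (q : ℕ) : List (Option (ℕ × Sym2 (List Bool))) → Option ℕ
  | [] => none
  | none :: t => (decodeXi q t).map (· + q)
  | some (j, _) :: _ => some j

theorem decode_xi (r : ℕ → ℕ) (d : ℕ) (hs : 0 < r d) (hR : 0 < r (d+1))
    (hdvd : r d ∣ r (d+1)) :
    ∀ (f : ℕ), ∀ (a b : List Bool), a.length = b.length →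
    a.take f = b.take f → a[f]? ≠ b[f]? →
    decodeXi (r (d+1) / r d) (xi r d a b) = some (f / r d) := by
  intro f
  induction f using Nat.strong_induction_on with
  | _ f ih =>
    intro a b hlen htake hne
    set R := r (d+1) with hRdef
    have hf : f < a.length := by
      by_contra hc
      apply hne
      rw [List.getElem?_eq_none (l := a) (by omega), List.getElem?_eq_none (l := b) (by omega)]
    have ha : a ≠ [] := by intro h; subst h; simp at hf
    have hb : b ≠ [] := by intro h; rw [h, List.length_nil] at hlen; omega
    rw [xi_cons r d hR a b ha hb]
    rcases lt_or_ge f R with hfR | hfR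
    · have h1 : (a.take R).take f = (b.take R).take f := by
        rw [List.take_take, List.take_take, min_eq_left (le_of_lt hfR), htake]
      have h2 : (a.take R)[f]? ≠ (b.take R)[f]? := by
        rw [List.getElem?_take, if_pos hfR, List.getElem?_take, if_pos hfR]; exact hne
      obtain ⟨pr, hpr⟩ := eta_fst (r d) hs f (a.take R) (b.take R)
        (by rw [List.length_take, List.length_take, hlen]) h1 h2
      rw [hpr]
      rfl
    · have hts : a.take R = b.take R := by
        have h1 : (a.take f).take R = (b.take f).take R := by rw [htake]
        rwa [List.take_take, List.take_take, min_eq_left hfR] at h1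
      rw [hts, eta_self]
      have hrec := ih (f - R) (by omega) (a.drop R) (b.drop R)
        (by rw [List.length_drop, List.length_drop, hlen])
        (by rw [List.take_drop, List.take_drop, show R + (f - R) = f by omega, htake])
        (by
          have h1 : (a.drop R)[f - R]? = a[f]? := by
            rw [List.getElem?_drop]; congr 1; omega
          have h2 : (b.drop R)[f - R]? = b[f]? := by
            rw [List.getElem?_drop]; congr 1; omega
          rw [h1, h2]; exact hne)
      show (decodeXi (R / r d) (xi r d (a.drop R) (b.drop R))).map (· + R / r d) = _
      rw [hrec]
      obtain ⟨k, hk⟩ := hdvd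
      have hkey : (f - R) / r d + R / r d = f / r d := by
        have h1 : R / r d = k := by rw [hk, Nat.mul_div_cancel_left _ hs]
        have h3 : ((f - R) + r d * k) / r d = (f - R) / r d + k :=
          Nat.add_mul_div_left _ _ hs
        rw [h1, ← h3]
        congr 1
        omega
      simp [hkey]

theorem exists_firstDiff : ∀ (a b : List Bool), a ≠ b →
    ∃ f, a.take f = b.take f ∧ a[f]? ≠ b[f]? := by
  intro a
  induction a with
  | nil =>
    intro b hb
    obtain ⟨y, t, rfl⟩ := List.exists_cons_of_ne_nil (Ne.symm hb)
    exact ⟨0, by simp, by simp⟩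
  | cons x ta ih =>
    intro b hb
    match b with
    | [] => exact ⟨0, by simp, by simp⟩
    | y :: tb =>
      by_cases hxy : x = y
      · subst hxy
        have htne : ta ≠ tb := by intro h; apply hb; rw [h]
        obtain ⟨f, h1, h2⟩ := ih tb htne
        exact ⟨f + 1, by simp [h1], by simpa using h2⟩
      · exact ⟨0, by simp, by simp [hxy]⟩

/-- For `1 ≤ d ≤ p`, with `α_d = alphaD (r d) α` the largest multiple of `r d` strictly
less than `α`: if `π_{α_d}(v) ≠ π_{α_d}(w)`, `x ≠ y` and `π_{α_d}(x) = π_{α_d}(y)`, then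
`c_p(v, w) ≠ c_p(x, y)` (inherited and emerging colors are distinct). -/
theorem stmt11 (p α : ℕ) (hp : 1 ≤ p) (hα : 1 ≤ α) (r : ℕ → ℕ) (hr0 : r 0 = 1)
    (hrpos : ∀ e ≤ p + 1, 0 < r e) (hrdvd : ∀ e < p + 1, r e ∣ r (e + 1))
    (d : ℕ) (hd : 1 ≤ d) (hdp : d ≤ p)
    (v w x y : List Bool) (hv : v.length = α) (hw : w.length = α)
    (hx : x.length = α) (hy : y.length = α)
    (h1 : v.take (alphaD (r d) α) ≠ w.take (alphaD (r d) α))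
    (h2 : x ≠ y) (h3 : x.take (alphaD (r d) α) = y.take (alphaD (r d) α)) :
    cColor r p v w ≠ cColor r p x y := by
  intro hcc
  have hs : 0 < r d := hrpos d (by omega)
  have hR : 0 < r (d+1) := hrpos (d+1) (by omega)
  have hdvd' : r d ∣ r (d+1) := hrdvd d (by omega)
  set m := (α - 1) / r d with hm
  have hαd : alphaD (r d) α = r d * m := rfl
  -- first difference of v, w lies below alphaD
  obtain ⟨f1, ht1, hg1⟩ := exists_firstDiff _ _ h1
  have hf1lt : f1 < alphaD (r d) α := by
    by_contra hc
    apply hg1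
    rw [List.getElem?_eq_none, List.getElem?_eq_none]
    · rw [List.length_take]; omega
    · rw [List.length_take]; omega
  have ht1' : v.take f1 = w.take f1 := by
    rwa [List.take_take, List.take_take, min_eq_left (le_of_lt hf1lt)] at ht1
  have hg1' : v[f1]? ≠ w[f1]? := by
    have e1 : (v.take (alphaD (r d) α))[f1]? = v[f1]? := by
      rw [List.getElem?_take, if_pos hf1lt]
    have e2 : (w.take (alphaD (r d) α))[f1]? = w[f1]? := by
      rw [List.getElem?_take, if_pos hf1lt]
    rw [← e1, ← e2]; exact hg1
  -- first difference of x, y lies at or above alphaD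
  obtain ⟨f2, ht2, hg2⟩ := exists_firstDiff x y h2
  have hf2ge : alphaD (r d) α ≤ f2 := by
    by_contra hc
    push_neg at hc
    apply hg2
    have e1 : (x.take (alphaD (r d) α))[f2]? = x[f2]? := by
      rw [List.getElem?_take, if_pos hc]
    have e2 : (y.take (alphaD (r d) α))[f2]? = y[f2]? := by
      rw [List.getElem?_take, if_pos hc]
    rw [← e1, ← e2, h3]
  have d1 := decode_xi r d hs hR hdvd' f1 v w (hv.trans hw.symm) ht1' hg1'
  have d2 := decode_xi r d hs hR hdvd' f2 x y (hx.trans hy.symm) ht2 hg2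
  have hxi : xi r d v w = xi r d x y := by
    have h := congrArg (fun l : EGColor => l[p - d]?) hcc
    simp only [cColor, List.getElem?_map] at h
    rw [List.getElem?_range (by omega)] at h
    simp only [Option.map_some] at h
    rw [show p - (p - d) = d by omega] at h
    exact Option.some_injective _ h
  rw [hxi, d2] at d1
  have heq : f2 / r d = f1 / r d := by injection d1
  rw [hαd] at hf1lt hf2ge
  have hlt : f1 / r d < m :=
    (Nat.div_lt_iff_lt_mul hs).2 (by rw [Nat.mul_comm]; exact hf1lt)
  have hge : m ≤ f2 / r d :=
    (Nat.le_div_iff_mul_le hs).2 (by rw [Nat.mul_comm]; exact hf2ge)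
  omega
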